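/- Let (A(t))_{t∈ℕ} be a sequence of n×n nonnegative real matrices, each having a positive diagonal. Then there exists a strictly increasing sequence of natural numbers 0 < t_0 < t_1 < t_2 < ... such that (1) for every i ∈ ℕ the backward accumulation A(t_{i+1}, t_i) has the same zero pattern as A(t_1, t_0), and (2) the relation on indices defined by a → b :⇔ (A(t_1,t_0))_{ab} > 0 is reflexive and transitive (equivalently, every Gantmacher block of the common pattern is either entirely positive or entirely zero). -/

import Mathlib

open Matrix

/-- Backward accumulation `A(t,s) = A(t-1) * A(t-2) * ⋯ * A(s)`
(with `backAcc A s s` the identity matrix). -/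
def backAcc {n : ℕ} (A : ℕ → Matrix (Fin n) (Fin n) ℝ) (s t : ℕ) :
    Matrix (Fin n) (Fin n) ℝ :=
  ((List.range' s (t - s)).reverse.map A).prod

namespace Statement1Aux

variable {n : ℕ}

lemma listProd_nonneg (A : ℕ → Matrix (Fin n) (Fin n) ℝ)
    (hnonneg : ∀ t i j, 0 ≤ A t i j) (l : List ℕ) :
    ∀ i j, 0 ≤ ((l.map A).prod) i j := by
  induction l with
  | nil =>
    intro i j
    rw [List.map_nil, List.prod_nil]
    by_cases h : i = j <;> simp [Matrix.one_apply, h]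
  | cons a l ih =>
    intro i j
    simp only [List.map_cons, List.prod_cons, Matrix.mul_apply]
    exact Finset.sum_nonneg fun k _ => mul_nonneg (hnonneg a i k) (ih k j)

lemma listProd_diag_pos (A : ℕ → Matrix (Fin n) (Fin n) ℝ)
    (hnonneg : ∀ t i j, 0 ≤ A t i j) (hdiag : ∀ t i, 0 < A t i i) (l : List ℕ) :
    ∀ i, 0 < ((l.map A).prod) i i := by
  induction l with
  | nil => intro i; simp [Matrix.one_apply]
  | cons a l ih =>
    intro i
    simp only [List.map_cons, List.prod_cons, Matrix.mul_apply]
    refine Finset.sum_pos' (fun k _ => mul_nonneg (hnonneg a i k)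
      (listProd_nonneg A hnonneg l k i)) ⟨i, Finset.mem_univ i, mul_pos (hdiag a i) (ih i)⟩

lemma backAcc_nonneg (A : ℕ → Matrix (Fin n) (Fin n) ℝ)
    (hnonneg : ∀ t i j, 0 ≤ A t i j) (s t : ℕ) (i j : Fin n) :
    0 ≤ backAcc A s t i j :=
  listProd_nonneg A hnonneg _ i j

lemma backAcc_diag_pos (A : ℕ → Matrix (Fin n) (Fin n) ℝ)
    (hnonneg : ∀ t i j, 0 ≤ A t i j) (hdiag : ∀ t i, 0 < A t i i) (s t : ℕ) (i : Fin n) :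
    0 < backAcc A s t i i :=
  listProd_diag_pos A hnonneg hdiag _ i

lemma mul_entry_pos {B C : Matrix (Fin n) (Fin n) ℝ}
    (hB : ∀ i j, 0 ≤ B i j) (hC : ∀ i j, 0 ≤ C i j)
    {a b c : Fin n} (h1 : 0 < B a b) (h2 : 0 < C b c) : 0 < (B * C) a c := by
  rw [Matrix.mul_apply]
  exact Finset.sum_pos' (fun k _ => mul_nonneg (hB a k) (hC k c))
    ⟨b, Finset.mem_univ b, mul_pos h1 h2⟩

lemma backAcc_mul (A : ℕ → Matrix (Fin n) (Fin n) ℝ) {r s t : ℕ}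
    (hrs : r ≤ s) (hst : s ≤ t) :
    backAcc A s t * backAcc A r s = backAcc A r t := by
  unfold backAcc
  rw [← List.prod_append, ← List.map_append, ← List.reverse_append]
  congr 2
  have h2 : r + (s - r) = s := by omega
  have h1 : t - r = (t - s) + (s - r) := by omega
  rw [h1, Nat.add_comm (t - s) (s - r), ← List.range'_append_1, h2]

lemma nat_mono_stab {g : ℕ → ℕ} (hg : Monotone g) {B : ℕ} (hB : ∀ t, g t ≤ B) :
    ∃ T, ∀ t, T ≤ t → g t = g T := by
  have hbdd : BddAbove (Set.range g) := ⟨B, by rintro x ⟨t, rfl⟩; exact hB t⟩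
  obtain ⟨T, hT⟩ := Nat.sSup_mem (Set.range_nonempty g) hbdd
  refine ⟨T, fun t ht => le_antisymm ?_ (hg ht)⟩
  rw [hT]
  exact le_csSup hbdd ⟨t, rfl⟩

lemma finset_mono_stab {α : Type*} [Fintype α] [DecidableEq α] {f : ℕ → Finset α}
    (hf : Monotone f) : ∃ T, ∀ t, T ≤ t → f t = f T := by
  obtain ⟨T, hT⟩ := nat_mono_stab (g := fun t => (f t).card)
    (fun a b h => Finset.card_le_card (hf h)) (B := Fintype.card α)
    (fun t => by simpa using Finset.card_le_card (Finset.subset_univ (f t)))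
  exact ⟨T, fun t ht => (Finset.eq_of_subset_of_card_le (hf ht) (hT t ht).le).symm⟩

lemma finset_anti_stab {α : Type*} [Fintype α] [DecidableEq α] {f : ℕ → Finset α}
    (hf : Antitone f) : ∃ T, ∀ t, T ≤ t → f t = f T := by
  obtain ⟨T, hT⟩ := finset_mono_stab (f := fun t => (f t)ᶜ)
    (fun a b h => Finset.compl_subset_compl.mpr (hf h))
  exact ⟨T, fun t ht => compl_inj_iff.mp (hT t ht)⟩

end Statement1Aux

open Statement1Aux

/-- For a sequence of nonnegative matrices with positive diagonals there is a
strictly increasing sequence of times `0 < t 0 < t 1 < ⋯` such that all the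
backward accumulations `A(t (i+1), t i)` have the same zero pattern, and the
relation `a → b :⇔ (A(t 1, t 0))_{a b} > 0` is reflexive and transitive
(equivalently, every Gantmacher block of the common pattern is either entirely
positive or entirely zero). -/
theorem statement1 {n : ℕ} (A : ℕ → Matrix (Fin n) (Fin n) ℝ)
    (hnonneg : ∀ t i j, 0 ≤ A t i j)
    (hdiag : ∀ t i, 0 < A t i i) :
    ∃ t : ℕ → ℕ, 0 < t 0 ∧ StrictMono t ∧
      (∀ i : ℕ, ∀ a b : Fin n,
        0 < backAcc A (t i) (t (i + 1)) a b ↔ 0 < backAcc A (t 0) (t 1) a b) ∧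
      (∀ a : Fin n, 0 < backAcc A (t 0) (t 1) a a) ∧
      (∀ a b c : Fin n, 0 < backAcc A (t 0) (t 1) a b →
        0 < backAcc A (t 0) (t 1) b c → 0 < backAcc A (t 0) (t 1) a c) := by
  classical
  set P : ℕ → ℕ → Finset (Fin n × Fin n) :=
    fun s t => Finset.univ.filter (fun p => 0 < backAcc A s t p.1 p.2) with hPdef
  have hmemP : ∀ s t p, p ∈ P s t ↔ 0 < backAcc A s t p.1 p.2 := by
    intro s t p; simp [hPdef]
  have hnn : ∀ s t i j, 0 ≤ backAcc A s t i j := backAcc_nonneg A hnonneg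
  have hdp : ∀ s t i, 0 < backAcc A s t i i := backAcc_diag_pos A hnonneg hdiag
  have hid : ∀ s t, t ≤ s → backAcc A s t = 1 := by
    intro s t h
    unfold backAcc
    rw [Nat.sub_eq_zero_of_le h]
    simp
  have hmono : ∀ s t t', t ≤ t' → P s t ⊆ P s t' := by
    intro s t t' h p hp
    rw [hmemP] at hp ⊢
    by_cases hst : s ≤ t
    · rw [← backAcc_mul A hst h]
      exact mul_entry_pos (hnn _ _) (hnn _ _) (hdp t t' p.1) hp
    · rw [hid s t (by omega)] at hp
      by_cases hpq : p.1 = p.2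
      · rw [hpq]; exact hdp _ _ _
      · simp [Matrix.one_apply, hpq] at hp
  have hanti : ∀ s' s t, s' ≤ s → P s t ⊆ P s' t := by
    intro s' s t h p hp
    rw [hmemP] at hp ⊢
    by_cases hst : s ≤ t
    · rw [← backAcc_mul A h hst]
      exact mul_entry_pos (hnn _ _) (hnn _ _) hp (hdp s' s p.2)
    · rw [hid s t (by omega)] at hp
      by_cases hpq : p.1 = p.2
      · rw [hpq]; exact hdp _ _ _
      · simp [Matrix.one_apply, hpq] at hp
  have hstab : ∀ s, ∃ T, s ≤ T ∧ ∀ t, T ≤ t → P s t = P s T := by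
    intro s
    obtain ⟨U, hU⟩ := finset_mono_stab (f := fun u => P s (s + u))
      (fun a b h => hmono s _ _ (by omega))
    refine ⟨s + U, by omega, fun t ht => ?_⟩
    have h1 : t = s + (t - s) := by omega
    rw [h1]
    exact hU (t - s) (by omega)
  choose T hTs hT using hstab
  set F : ℕ → Finset (Fin n × Fin n) := fun s => P s (T s) with hFdef
  have hsubF : ∀ s t, P s t ⊆ F s := by
    intro s t
    have h1 : P s t ⊆ P s (max t (T s)) := hmono s _ _ (le_max_left _ _)
    have h2 : P s (max t (T s)) = P s (T s) := hT s _ (le_max_right _ _)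
    rw [h2] at h1
    exact h1
  have hFanti : Antitone F := by
    intro s' s h
    exact (hanti s' s (T s) h).trans (hsubF s' (T s))
  obtain ⟨S, hS⟩ := finset_anti_stab hFanti
  set τ : ℕ → ℕ := fun i => Nat.rec (S + 1) (fun _ prev => max (T prev) (prev + 1)) i
    with hτdef
  have hτ0 : τ 0 = S + 1 := rfl
  have hτsucc : ∀ i, τ (i + 1) = max (T (τ i)) (τ i + 1) := fun i => rfl
  have hτmono : StrictMono τ := by
    apply strictMono_nat_of_lt_succ
    intro i
    rw [hτsucc i]
    omega
  have hτS : ∀ i, S ≤ τ i := by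
    intro i
    induction i with
    | zero => rw [hτ0]; omega
    | succ i ih => exact le_trans ih (hτmono (Nat.lt_succ_self i)).le
  have hpat : ∀ i, P (τ i) (τ (i + 1)) = F S := by
    intro i
    have h1 : T (τ i) ≤ τ (i + 1) := by rw [hτsucc i]; omega
    rw [hT (τ i) (τ (i + 1)) h1]
    exact hS (τ i) (hτS i)
  have h01 : P (τ 0) (τ 1) = F S := hpat 0
  have h12 : P (τ 1) (τ 2) = F S := hpat 1
  refine ⟨τ, by rw [hτ0]; omega, hτmono, ?_, ?_, ?_⟩
  · intro i a b
    constructor <;> intro h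
    · have hm : (a, b) ∈ P (τ i) (τ (i + 1)) := (hmemP _ _ _).mpr h
      rw [hpat i, ← h01] at hm
      exact (hmemP _ _ _).mp hm
    · have hm : (a, b) ∈ P (τ 0) (τ 1) := (hmemP _ _ _).mpr h
      rw [h01, ← hpat i] at hm
      exact (hmemP _ _ _).mp hm
  · intro a; exact hdp _ _ a
  · intro a b c hab hbc
    have hab' : 0 < backAcc A (τ 1) (τ 2) a b := by
      have hm : (a, b) ∈ P (τ 0) (τ 1) := (hmemP _ _ _).mpr hab
      rw [h01, ← h12] at hm
      exact (hmemP _ _ _).mp hm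
    have hle01 : τ 0 ≤ τ 1 := (hτmono (Nat.lt_succ_self 0)).le
    have hle12 : τ 1 ≤ τ 2 := (hτmono (Nat.lt_succ_self 1)).le
    have hcomp : 0 < backAcc A (τ 0) (τ 2) a c := by
      rw [← backAcc_mul A hle01 hle12]
      exact mul_entry_pos (hnn _ _) (hnn _ _) hab' hbc
    have hm : (a, c) ∈ P (τ 0) (τ 2) := (hmemP _ _ _).mpr hcomp
    have hm2 : (a, c) ∈ F (τ 0) := hsubF _ _ hm
    rw [hS (τ 0) (hτS 0), ← h01] at hm2
    exact (hmemP _ _ _).mp hm2
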